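/- Let D be a division ring with center F and let N be a normal subgroup of D^*. If u ∈ N is algebraic over F and the degree of the minimal polynomial of u over F is m, then u^m = N_{F(u)/F}(u)·c for some c in the commutator subgroup [D^*, N] (the subgroup of D^* generated by all commutators a^{-1}b^{-1}ab with a ∈ D^*, b ∈ N), where F(u) is the subfield of D generated by F and u and N_{F(u)/F} is the field norm. In particular u^m lies in the subgroup of D^* generated by the center Z(N) of N together with [D^*, N]. -/

import Mathlib

universe u v



open Polynomial

section Lval
variable {D : Type*} [DivisionRing D]

/-- Left evaluation of a polynomial: `Σ aⁱ * cᵢ`. -/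
noncomputable def lval (a : D) (f : D[X]) : D := f.sum fun i c => a ^ i * c

lemma lval_monomial (a : D) (n : ℕ) (b : D) : lval a (monomial n b) = a ^ n * b :=
  by
  unfold lval
  rw [Polynomial.sum_monomial_index]
  exact mul_zero _

lemma lval_C (a b : D) : lval a (C b) = b := by
  rw [← monomial_zero_left, lval_monomial, pow_zero, one_mul]

lemma lval_add (a : D) (f g : D[X]) : lval a (f + g) = lval a f + lval a g :=
  Polynomial.sum_add_index f g _ (fun i => mul_zero _) (fun i b c => mul_add _ _ _)

lemma lval_neg (a : D) (f : D[X]) : lval a (-f) = - lval a f := by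
  unfold lval
  rw [Polynomial.sum_def, Polynomial.sum_def, Polynomial.support_neg, ← Finset.sum_neg_distrib]
  simp [mul_neg]

lemma lval_sub (a : D) (f g : D[X]) : lval a (f - g) = lval a f - lval a g := by
  rw [sub_eq_add_neg, lval_add, lval_neg, sub_eq_add_neg]

lemma lval_X_sub_C (a c : D) : lval a (X - C c) = a - c := by
  rw [lval_sub, lval_C, ← monomial_one_one_eq_X, lval_monomial, pow_one, mul_one]

lemma lval_mul_monomial (a : D) (f : D[X]) (n : ℕ) (b : D) :
    lval a (f * monomial n b) = a ^ n * lval a f * b := by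
  induction f using Polynomial.induction_on' with
  | add p q hp hq => rw [add_mul, lval_add, lval_add, hp, hq, mul_add, add_mul]
  | monomial k c =>
      rw [monomial_mul_monomial, lval_monomial, lval_monomial, add_comm k n, pow_add]
      simp [mul_assoc]

lemma lval_mul_unit (a : D) (f g : D[X]) (d : Dˣ) (hd : lval a f = ↑d) :
    lval a (f * g) = ↑d * lval (↑d⁻¹ * a * ↑d) g := by
  induction g using Polynomial.induction_on' with
  | add p q hp hq => rw [mul_add, lval_add, hp, hq, lval_add, mul_add]
  | monomial n b =>
      rw [lval_mul_monomial, hd, lval_monomial, Units.conj_pow']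
      simp [mul_assoc]

lemma lval_mul_zero (a : D) (f g : D[X]) (hd : lval a f = 0) : lval a (f * g) = 0 := by
  induction g using Polynomial.induction_on' with
  | add p q hp hq => rw [mul_add, lval_add, hp, hq, add_zero]
  | monomial n b => rw [lval_mul_monomial, hd, mul_zero, zero_mul]

/-- If `lval c g = 0`, then `X - C c` divides `g` on the left. -/
lemma eq_X_sub_C_mul_divByMonic (g : D[X]) (c : D) (h : lval c g = 0) :
    g = (X - C c) * (g /ₘ (X - C c)) := by
  have hm : Monic (X - C c) := monic_X_sub_C c
  have key := modByMonic_add_div g (X - C c)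
  have hdeg : (g %ₘ (X - C c)).degree < 1 := by
    simpa [degree_X_sub_C] using degree_modByMonic_lt g hm
  have hC : g %ₘ (X - C c) = C ((g %ₘ (X - C c)).coeff 0) :=
    eq_C_of_degree_le_zero (by exact_mod_cast Order.le_of_lt_succ (by exact_mod_cast hdeg))
  have h0 : lval c g = (g %ₘ (X - C c)).coeff 0 := by
    conv_lhs => rw [← key]
    rw [lval_add, lval_mul_zero _ _ _ (by rw [lval_X_sub_C, sub_self]), add_zero]
    conv_lhs => rw [hC]
    rw [lval_C]
  rw [h0] at h
  rw [hC, h, map_zero, zero_add] at key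
  exact key.symm

end Lval

section Conj

variable {D : Type*} [DivisionRing D]

/-- Conjugation by a unit, as a ring homomorphism. -/
def conjHom (q : Dˣ) : D →+* D where
  toFun x := ↑q * x * ↑q⁻¹
  map_one' := by simp
  map_mul' x y := by simp [mul_assoc]
  map_zero' := by simp
  map_add' x y := by simp [mul_add, add_mul]

@[simp] lemma conjHom_apply (q : Dˣ) (x : D) : conjHom q x = ↑q * x * ↑q⁻¹ := rfl

lemma conjHom_injective (q : Dˣ) : Function.Injective (conjHom q) := by
  intro x y h
  simpa [mul_assoc] using congrArg (fun z => (↑q⁻¹ : D) * z * ↑q) h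

lemma lval_map_conj (q : Dˣ) (x : D) (f : D[X]) :
    lval (↑q * x * ↑q⁻¹) (f.map (conjHom q)) = ↑q * lval x f * ↑q⁻¹ := by
  induction f using Polynomial.induction_on' with
  | add p r hp hr => rw [Polynomial.map_add, lval_add, hp, hr, lval_add, mul_add, add_mul]
  | monomial n b =>
      rw [map_monomial, lval_monomial, conjHom_apply, lval_monomial, Units.conj_pow]
      simp [mul_assoc]

variable {F : Type*} [Field F] [Algebra F D]

lemma lval_map_algebraMap (f₀ : F[X]) (x : D) :
    lval x (f₀.map (algebraMap F D)) = Polynomial.aeval x f₀ := by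
  induction f₀ using Polynomial.induction_on' with
  | add p r hp hr => rw [Polynomial.map_add, lval_add, hp, hr, map_add]
  | monomial n b =>
      rw [map_monomial, lval_monomial, aeval_monomial, ← Algebra.commutes]

lemma aeval_unit_conj (f₀ : F[X]) (d : Dˣ) (x : D) :
    Polynomial.aeval (↑d * x * ↑d⁻¹) f₀ = ↑d * Polynomial.aeval x f₀ * ↑d⁻¹ := by
  induction f₀ using Polynomial.induction_on' with
  | add p r hp hr => rw [map_add, hp, hr, map_add, mul_add, add_mul]
  | monomial n b =>
      rw [aeval_monomial, aeval_monomial, Units.conj_pow, ← mul_assoc, ← mul_assoc]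
      rw [Algebra.commutes b (↑d : D)]
      simp [mul_assoc]

/-- Key vanishing lemma: a nonzero polynomial over `D` which vanishes (in the sense of
left evaluation) at every conjugate of `a` has degree at least `deg (minpoly F a)`,
provided the center of `D` is exactly `F`. -/
lemma vanish_ge (hcenter : Subalgebra.center F D = ⊥) (a : D) :
    ∀ n : ℕ, ∀ f : D[X], f.natDegree = n → f ≠ 0 →
      (∀ d : Dˣ, lval (↑d * a * ↑d⁻¹) f = 0) →
      (minpoly F a).natDegree ≤ f.natDegree := by
  intro n
  induction n using Nat.strong_induction_on with
  | _ n IH =>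
  intro f hfn hf0 hvan
  -- make f monic by multiplying on the right by the inverse of the leading coefficient
  set l := f.leadingCoeff with hl
  have hl0 : l ≠ 0 := leadingCoeff_ne_zero.mpr hf0
  set g : D[X] := f * C l⁻¹ with hg
  have hgdeg : g.natDegree = f.natDegree := natDegree_mul_C (inv_ne_zero hl0)
  have hgmonic : g.Monic := by
    unfold Polynomial.Monic
    rw [Polynomial.leadingCoeff, hgdeg, hg, coeff_mul_C, ← Polynomial.leadingCoeff, ← hl, mul_inv_cancel₀ hl0]
  have hgvan : ∀ d : Dˣ, lval (↑d * a * ↑d⁻¹) g = 0 := by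
    intro d
    have : C l⁻¹ = monomial 0 l⁻¹ := (monomial_zero_left (a := l⁻¹)).symm
    rw [hg, this, lval_mul_monomial, hvan d, mul_zero, zero_mul]
  by_cases hfix : ∀ q : Dˣ, g.map (conjHom q) = g
  · -- all coefficients of g are central, so g comes from F[X]
    have hcoeff : ∀ i, g.coeff i ∈ Set.range (algebraMap F D) := by
      intro i
      have hmem : g.coeff i ∈ Subalgebra.center F D := by
        rw [Subalgebra.mem_center_iff]
        intro b
        rcases eq_or_ne b 0 with rfl | hb
        · rw [zero_mul, mul_zero]
        · have := congrArg (fun p => p.coeff i) (hfix (Units.mk0 b hb))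
          simp only [coeff_map, conjHom_apply] at this
          have h2 := congrArg (fun z => z * b) this
          simpa [mul_assoc, inv_mul_cancel₀ hb] using h2
      rw [hcenter] at hmem
      exact (Algebra.mem_bot).mp hmem
    obtain ⟨g₀, hg₀map, hg₀deg, hg₀monic⟩ :=
      Polynomial.lifts_and_degree_eq_and_monic
        ((Polynomial.lifts_iff_coeff_lifts _).mpr hcoeff) hgmonic
    have haev : Polynomial.aeval a g₀ = 0 := by
      rw [← lval_map_algebraMap g₀ a, hg₀map]
      have := hgvan 1
      simpa using this
    have hmin := minpoly.degree_le_of_ne_zero F a hg₀monic.ne_zero haev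
    have : (minpoly F a).natDegree ≤ g₀.natDegree := natDegree_le_natDegree hmin
    rwa [natDegree_eq_of_degree_eq hg₀deg, hgdeg] at this
  · push_neg at hfix
    obtain ⟨q, hq⟩ := hfix
    set h : D[X] := g - g.map (conjHom q) with hh
    have hh0 : h ≠ 0 := sub_ne_zero.mpr (Ne.symm hq)
    have hmapmonic : (g.map (conjHom q)).Monic := by
      have : (conjHom q) g.leadingCoeff = 1 := by rw [hgmonic, map_one]
      exact hgmonic.map _
    have hdegeq : (g.map (conjHom q)).degree = g.degree :=
      degree_map_eq_of_injective (conjHom_injective q) g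
    have hlt : h.degree < g.degree := by
      rw [hh]
      refine degree_sub_lt hdegeq.symm hgmonic.ne_zero ?_
      rw [hgmonic, hmapmonic]
    have hhn : h.natDegree < n := by
      rw [← hfn, ← hgdeg]
      exact natDegree_lt_natDegree hh0 hlt
    have hhvan : ∀ d : Dˣ, lval (↑d * a * ↑d⁻¹) h = 0 := by
      intro d
      rw [hh, lval_sub, hgvan d]
      have key : (↑d : D) * a * ↑d⁻¹ = ↑q * (↑(q⁻¹ * d) * a * ↑(q⁻¹ * d)⁻¹) * ↑q⁻¹ := by
        simp [mul_assoc]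
      rw [key, lval_map_conj, hgvan (q⁻¹ * d), mul_zero, zero_mul, sub_zero]
    have := IH h.natDegree hhn h rfl hh0 hhvan
    calc (minpoly F a).natDegree ≤ h.natDegree := this
    _ ≤ f.natDegree := by omega

end Conj

section Wedderburn

variable {D : Type*} [DivisionRing D] {F : Type*} [Field F] [Algebra F D]

/-- Basic facts about products of monic linear polynomials. -/
lemma lin_prod_facts (L : List D) :
    ((L.map fun b => X - C b).prod).Monic ∧
    ((L.map fun b => X - C b).prod).natDegree = L.length ∧
    ((L.map fun b => X - C b).prod).coeff 0 = (L.map fun b => -b).prod := by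
  induction L with
  | nil => simp [monic_one]
  | cons b L IH =>
      obtain ⟨hm, hd, hc⟩ := IH
      have hbm : (X - C b).Monic := monic_X_sub_C b
      refine ⟨hbm.mul hm, ?_, ?_⟩
      · rw [List.map_cons, List.prod_cons, (hbm.natDegree_mul hm), natDegree_X_sub_C, hd,
          List.length_cons]
        omega
      · rw [List.map_cons, List.prod_cons, mul_coeff_zero, hc, List.map_cons, List.prod_cons]
        simp

lemma fact_aux (hcenter : Subalgebra.center F D = ⊥) (a : D) (ha : IsIntegral F a) :
    ∀ n : ℕ, ∀ g : D[X], g.natDegree = n → g.Monic →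
    ∀ L : List Dˣ,
      (minpoly F a).map (algebraMap F D) =
        (L.map fun d : Dˣ => X - C (↑d * a * ↑d⁻¹)).prod * g →
    ∃ L' : List Dˣ,
      (minpoly F a).map (algebraMap F D) = (L'.map fun d : Dˣ => X - C (↑d * a * ↑d⁻¹)).prod := by
  intro n
  induction n using Nat.strong_induction_on with
  | _ n IH =>
  intro g hgn hgmonic L hP
  rcases Nat.eq_zero_or_pos n with hn0 | hnpos
  · refine ⟨L, ?_⟩
    have : g = 1 := hgmonic.natDegree_eq_zero.mp (hgn.trans hn0)
    rwa [this, mul_one] at hP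
  · set P : D[X] := (minpoly F a).map (algebraMap F D) with hPdef
    set f : D[X] := (L.map fun d : Dˣ => X - C (↑d * a * ↑d⁻¹)).prod with hfdef
    have hffacts := lin_prod_facts (L.map fun d : Dˣ => (↑d * a * ↑d⁻¹ : D))
    rw [List.map_map] at hffacts
    have hfmonic : f.Monic := hffacts.1
    have hPdeg : P.natDegree = (minpoly F a).natDegree :=
      (minpoly.monic ha).natDegree_map _
    have hsplit : P.natDegree = f.natDegree + g.natDegree := by
      rw [hP, hfmonic.natDegree_mul hgmonic]
    have hflt : f.natDegree < (minpoly F a).natDegree := by omega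
    -- find a conjugate where f does not vanish
    have : ¬ ∀ d : Dˣ, lval (↑d * a * ↑d⁻¹) f = 0 := by
      intro hvan
      exact absurd (vanish_ge hcenter a f.natDegree f rfl hfmonic.ne_zero hvan)
        (by omega)
    push_neg at this
    obtain ⟨d, hd⟩ := this
    set c : D := ↑d * a * ↑d⁻¹ with hc
    set e : Dˣ := Units.mk0 (lval c f) hd with he
    have hPvan : lval c P = 0 := by
      rw [hPdef, lval_map_algebraMap, hc, aeval_unit_conj, minpoly.aeval, mul_zero, zero_mul]
    have hprod : lval c P = ↑e * lval (↑e⁻¹ * c * ↑e) g := by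
      rw [hP]; exact lval_mul_unit c f g e rfl
    have hgvan : lval (↑e⁻¹ * c * ↑e) g = 0 := by
      have := hPvan
      rw [hprod] at this
      exact (Units.mul_right_eq_zero e).mp this
    set c' : D := ↑e⁻¹ * c * ↑e with hc'
    set g₁ : D[X] := g /ₘ (X - C c') with hg₁
    have hgfact : g = (X - C c') * g₁ := eq_X_sub_C_mul_divByMonic g c' hgvan
    have hg₁monic : g₁.Monic := by
      have : g.leadingCoeff = g₁.leadingCoeff := by
        conv_lhs => rw [hgfact]
        exact leadingCoeff_monic_mul (monic_X_sub_C c')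
      unfold Polynomial.Monic
      rw [← this, hgmonic]
    have hg₁deg : g₁.natDegree < n := by
      have : g.natDegree = 1 + g₁.natDegree := by
        conv_lhs => rw [hgfact, (monic_X_sub_C c').natDegree_mul hg₁monic, natDegree_X_sub_C]
      omega
    -- the new conjugating unit
    set d' : Dˣ := e⁻¹ * d with hd'
    have hc'conj : c' = ↑d' * a * ↑d'⁻¹ := by
      rw [hc', hc, hd']
      simp [mul_assoc]
    refine IH g₁.natDegree hg₁deg g₁ rfl hg₁monic (L ++ [d']) ?_
    rw [List.map_append, List.prod_append, List.map_singleton, List.prod_singleton,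
      ← hfdef, mul_assoc, ← hc'conj, ← hgfact]
    exact hP

/-- **Wedderburn's factorization theorem** : the minimal polynomial of `a` over the center
factors over `D` into linear factors `X - C cᵢ` with each `cᵢ` a conjugate of `a`. -/
theorem wedderburn_factorization (hcenter : Subalgebra.center F D = ⊥) {a : D}
    (ha : IsIntegral F a) :
    ∃ L : List Dˣ, L.length = (minpoly F a).natDegree ∧
      (minpoly F a).map (algebraMap F D) = (L.map fun d : Dˣ => X - C (↑d * a * ↑d⁻¹)).prod := by
  have hmonic : ((minpoly F a).map (algebraMap F D)).Monic := (minpoly.monic ha).map _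
  obtain ⟨L, hL⟩ := fact_aux hcenter a ha ((minpoly F a).map (algebraMap F D)).natDegree
    ((minpoly F a).map (algebraMap F D)) rfl hmonic []
    (by simp)
  refine ⟨L, ?_, hL⟩
  have hfacts := lin_prod_facts (L.map fun d : Dˣ => (↑d * a * ↑d⁻¹ : D))
  rw [List.map_map] at hfacts
  simp only [Function.comp_def] at hfacts
  have := hfacts.2.1
  rw [← hL, (minpoly.monic ha).natDegree_map _] at this
  rw [List.length_map] at this
  omega

end Wedderburn

section PB

variable {F : Type*} {D : Type*} [Field F] [DivisionRing D] [Algebra F D]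

/-- The power basis of `F[a]` inside a division ring `D` (which need not be commutative). -/
noncomputable def adjoinBasis {a : D} (ha : IsIntegral F a) :
    Module.Basis (Fin (minpoly F a).natDegree) F (Algebra.adjoin F ({a} : Set D)) := by
  set S := Algebra.adjoin F ({a} : Set D) with hS
  set ub : S := ⟨a, Algebra.self_mem_adjoin_singleton F a⟩ with hub
  have hval : (S.val : S →ₐ[F] D) ub = a := rfl
  have hmin : minpoly F a = minpoly F ub := by
    conv_lhs => rw [← hval]
    exact minpoly.algHom_eq S.val Subtype.coe_injective ub
  have hint : IsIntegral F ub := by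
    refine (isIntegral_algHom_iff S.val Subtype.coe_injective).mp ?_
    rwa [hval]
  apply Module.Basis.mk (v := fun i : Fin (minpoly F a).natDegree => ub ^ (i : ℕ))
  · have := linearIndependent_pow (K := F) ub
    rw [← hmin] at this
    exact this
  · rintro ⟨y, hy⟩ -
    have hy' := hy
    rw [hS, Algebra.adjoin_singleton_eq_range_aeval] at hy'
    obtain ⟨f, hf⟩ := (AlgHom.mem_range _).mp hy'
    have hyub : (⟨y, hy⟩ : S) = Polynomial.aeval ub f := by
      apply Subtype.ext
      show y = _
      rw [← hf, ← hval]
      exact Polynomial.aeval_algHom_apply S.val ub f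
    have := hint.mem_span_pow (y := (⟨y, hy⟩ : S)) ⟨f, hyub⟩
    rw [← hmin] at this
    exact this

/-- The power basis of `F[a]` in a division ring. -/
noncomputable def adjoinPB {a : D} (ha : IsIntegral F a) :
    PowerBasis F (Algebra.adjoin F ({a} : Set D)) where
  gen := ⟨a, Algebra.self_mem_adjoin_singleton F a⟩
  dim := (minpoly F a).natDegree
  basis := adjoinBasis ha
  basis_eq_pow i := by simp only [adjoinBasis, eq_mpr_eq_cast, cast_eq, Module.Basis.coe_mk]

lemma norm_adjoin_eq {a : D} (ha : IsIntegral F a) :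
    Algebra.norm F (⟨a, Algebra.self_mem_adjoin_singleton F a⟩ :
        Algebra.adjoin F ({a} : Set D)) =
      (-1) ^ (minpoly F a).natDegree * (minpoly F a).coeff 0 := by
  have h := Algebra.PowerBasis.norm_gen_eq_coeff_zero_minpoly (adjoinPB ha)
  have hmin : minpoly F ((adjoinPB ha).gen) = minpoly F a := by
    have := minpoly.algHom_eq (Algebra.adjoin F ({a} : Set D)).val
      Subtype.coe_injective (adjoinPB ha).gen
    rw [← this]
    rfl
  rw [hmin] at h
  exact h

lemma neg_list_prod (L : List D) :
    (L.map fun b => -b).prod = (-1) ^ L.length * L.prod := by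
  induction L with
  | nil => simp
  | cons b L IH =>
      rw [List.map_cons, List.prod_cons, IH, List.prod_cons, List.length_cons, pow_succ,
        mul_neg_one, neg_mul, neg_mul, neg_inj, ← mul_assoc,
        ← ((Commute.neg_one_left b).pow_left L.length).eq, mul_assoc]

end PB


/-- Let `D` be a division ring with center `F` and `N` a normal subgroup of `D^*`.  If
`u ∈ N` is algebraic over `F` with minimal polynomial of degree `m`, then
`u^m = N_{F(u)/F}(u) · c` for some `c` in the commutator subgroup `[D^*, N]`, where
`F(u) = F[u]` is the subfield of `D` generated by `F` and `u` and `N_{F(u)/F}` is the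
field norm.  In particular `u^m` lies in the subgroup generated by the center `Z(N)` of
`N` together with `[D^*, N]`. -/
theorem stmt_17 {F : Type v} {D : Type u} [Field F] [DivisionRing D] [Algebra F D]
    (hcenter : Subalgebra.center F D = ⊥)
    (N : Subgroup Dˣ) (hN : N.Normal)
    (u : Dˣ) (hu : u ∈ N) (hint : IsIntegral F (u : D)) :
    (∃ c ∈ ⁅(⊤ : Subgroup Dˣ), N⁆,
      ((u : D)) ^ (minpoly F (u : D)).natDegree =
        algebraMap F D (Algebra.norm F
          (⟨(u : D), Algebra.self_mem_adjoin_singleton F (u : D)⟩ :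
            Algebra.adjoin F {(u : D)})) * (c : D)) ∧
    u ^ (minpoly F (u : D)).natDegree ∈
      (Subgroup.centralizer (N : Set Dˣ) ⊓ N) ⊔ ⁅(⊤ : Subgroup Dˣ), N⁆ := by
  haveI := hN
  set a : D := (u : D) with ha
  set m : ℕ := (minpoly F a).natDegree with hm
  -- Wedderburn factorization
  obtain ⟨L, hlen, hfact⟩ := wedderburn_factorization hcenter hint
  have hfacts := lin_prod_facts (L.map fun d : Dˣ => (↑d * a * ↑d⁻¹ : D))
  rw [List.map_map] at hfacts
  simp only [Function.comp_def] at hfacts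
  -- constant coefficient of the minimal polynomial as product of conjugates
  have hc0 : algebraMap F D ((minpoly F a).coeff 0)
      = ((L.map fun d : Dˣ => (↑d * a * ↑d⁻¹ : D)).map fun b => -b).prod := by
    rw [← coeff_map, hfact]
    exact hfacts.2.2
  have hnegs : ((L.map fun d : Dˣ => (↑d * a * ↑d⁻¹ : D)).map fun b => -b).prod
      = (-1) ^ m * (L.map fun d : Dˣ => (↑d * a * ↑d⁻¹ : D)).prod := by
    rw [neg_list_prod, List.length_map, hlen]
  -- the norm as a product of conjugates
  have hnorm := norm_adjoin_eq (F := F) hint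
  have key : algebraMap F D (Algebra.norm F
      (⟨a, Algebra.self_mem_adjoin_singleton F a⟩ : Algebra.adjoin F ({a} : Set D)))
      = (L.map fun d : Dˣ => (↑d * a * ↑d⁻¹ : D)).prod := by
    rw [hnorm, map_mul, map_pow, map_neg, map_one, hc0, hnegs, ← mul_assoc, ← pow_add,
      Even.neg_one_pow ⟨m, rfl⟩, one_mul]
  -- the same product, as a unit
  set Lu : List Dˣ := L.map fun d => d * u * d⁻¹ with hLu
  set z : Dˣ := Lu.prod with hz
  have hzval : (z : D) = (L.map fun d : Dˣ => (↑d * a * ↑d⁻¹ : D)).prod := by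
    have h1 : (z : D) = (Units.coeHom D) Lu.prod := rfl
    rw [h1, map_list_prod (Units.coeHom D) Lu, hLu, List.map_map]
    congr 1
  -- quotient group argument
  set K' : Subgroup Dˣ := ⁅(⊤ : Subgroup Dˣ), N⁆ with hK'
  haveI : K'.Normal := Subgroup.commutator_normal ⊤ N
  have hπ : ∀ d : Dˣ, ((d * u * d⁻¹ : Dˣ) : Dˣ ⧸ K') = (u : Dˣ ⧸ K') := by
    intro d
    refine (QuotientGroup.eq).mpr ?_
    open scoped commutatorElement in
    have : (d * u * d⁻¹)⁻¹ * u = ⁅d, u⁻¹⁆ := by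
      simp [commutatorElement_def, mul_assoc]
    rw [this]
    exact Subgroup.commutator_mem_commutator (Subgroup.mem_top d) (N.inv_mem hu)
  have hπz : (z : Dˣ ⧸ K') = ((u ^ m : Dˣ) : Dˣ ⧸ K') := by
    have h1 : (z : Dˣ ⧸ K') = (QuotientGroup.mk' K') Lu.prod := rfl
    rw [h1, map_list_prod (QuotientGroup.mk' K') Lu]
    have h2 : ∀ x ∈ Lu.map (QuotientGroup.mk' K'), x = ((u : Dˣ) : Dˣ ⧸ K') := by
      intro x hx
      rw [hLu, List.map_map] at hx
      obtain ⟨d, _, rfl⟩ := List.mem_map.mp hx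
      exact hπ d
    rw [List.prod_eq_pow_card _ _ h2, List.length_map, hLu, List.length_map, hlen]
    exact ((QuotientGroup.mk' K').map_pow u m).symm
  set c : Dˣ := z⁻¹ * u ^ m with hc
  have hcmem : c ∈ K' := (QuotientGroup.eq).mp hπz
  have huzc : u ^ m = z * c := by rw [hc, mul_inv_cancel_left]
  have hzcentral : ∀ x : D, (z : D) * x = x * (z : D) := by
    intro x
    rw [hzval, ← key]
    exact Algebra.commutes _ x
  constructor
  · refine ⟨c, hcmem, ?_⟩
    have : ((u ^ m : Dˣ) : D) = ((z * c : Dˣ) : D) := by rw [huzc]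
    rw [Units.val_pow_eq_pow_val] at this
    rw [this, Units.val_mul, hzval, key]
  · have hzN : z ∈ N := by
      have : z = u ^ m * c⁻¹ := by rw [hc]; group
      rw [this]
      exact N.mul_mem (N.pow_mem hu m) (N.inv_mem (Subgroup.commutator_le_right ⊤ N hcmem))
    have hzcen : z ∈ Subgroup.centralizer (N : Set Dˣ) := by
      rw [Subgroup.mem_centralizer_iff]
      intro g _
      exact Units.ext (by simpa using (hzcentral (g : D)).symm)
    rw [huzc]
    exact Subgroup.mul_mem _
      (Subgroup.mem_sup_left ⟨hzcen, hzN⟩)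
      (Subgroup.mem_sup_right hcmem)
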